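/- For every r and m there exist δ = δ(r,m) > 0 and n₀ = n₀(r,m) with the following property: if A and B are sets of real numbers with |A| = |B| = n ≥ n₀ and |A + B| ≤ n^{1+δ}, then for any r-coloring of A × B there exist real numbers a, b and nonzero real numbers a_1, …, a_m such that the Hilbert cube H_m(a; a_1,…,a_m) is contained in A, the Hilbert cube H_m(b; a_1,…,a_m) is contained in B, and all points of H_m(a; a_1,…,a_m) × H_m(b; a_1,…,a_m) receive the same color. -/

import Mathlib

open Pointwise

section MonochromaticHilbertCubes

open Finset Combinatorics


lemma shift_card_eq (D : Finset ℝ) (b : ℝ) :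
    #(D.filter (fun x => x + b ∈ D)) = #(D.filter (fun x => x + -b ∈ D)) := by
  apply Finset.card_bij (fun x _ => x + b)
  · intro x hx
    simp only [mem_filter] at hx ⊢
    refine ⟨hx.2, by simpa using hx.1⟩
  · intro x _ y _ h
    exact add_right_cancel h
  · intro y hy
    simp only [mem_filter] at hy
    exact ⟨y + -b, by simp only [mem_filter]; exact ⟨hy.2, by simpa using hy.1⟩, by ring⟩

lemma popular_pos_diff (D : Finset ℝ) (K : ℕ) (hDK : #(D - D) ≤ K)
    (hD2 : 2 ≤ #D) :
    ∃ t : ℝ, 0 < t ∧ (#D.offDiag : ℝ) ≤ (K : ℝ) * (#(D.filter (fun x => x + t ∈ D)) : ℝ) := by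
  classical
  set T : Finset ℝ := (D - D).filter (fun z => z ≠ 0) with hT
  have hmaps : ∀ p ∈ D.offDiag, p.1 - p.2 ∈ T := by
    intro p hp
    rw [Finset.mem_offDiag] at hp
    rw [hT, mem_filter]
    exact ⟨Finset.sub_mem_sub hp.1 hp.2.1, sub_ne_zero.2 hp.2.2⟩
  have hoff : #D.offDiag = ∑ z ∈ T, #(D.offDiag.filter (fun p => p.1 - p.2 = z)) :=
    Finset.card_eq_sum_card_fiberwise hmaps
  have hoffpos : 0 < #D.offDiag := by
    rw [Finset.offDiag_card]
    have h2 : 2 * #D ≤ #D * #D := Nat.mul_le_mul_right _ hD2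
    omega
  have hTne : T.Nonempty := by
    obtain ⟨p, hp⟩ := Finset.card_pos.1 hoffpos
    exact ⟨p.1 - p.2, hmaps p hp⟩
  have hTK : #T ≤ K := le_trans (Finset.card_le_card (Finset.filter_subset _ _)) hDK
  have hTpos : (0:ℝ) < #T := by exact_mod_cast Finset.card_pos.2 hTne
  -- pigeonhole
  have hsum : ∑ _z ∈ T, (#D.offDiag : ℝ) / #T ≤ ∑ z ∈ T, (#(D.offDiag.filter (fun p => p.1 - p.2 = z)) : ℝ) := by
    rw [Finset.sum_const, nsmul_eq_mul, mul_div_cancel₀]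
    · rw [← Nat.cast_sum, ← hoff]
    · exact ne_of_gt hTpos
  obtain ⟨z, hzT, hz⟩ := Finset.exists_le_of_sum_le hTne hsum
  -- fiber injects into the shift set
  have hfib : #(D.offDiag.filter (fun p => p.1 - p.2 = z)) ≤ #(D.filter (fun x => x + z ∈ D)) := by
    apply Finset.card_le_card_of_injOn (fun p => p.2)
    · intro p hp
      simp only [mem_filter, Finset.mem_offDiag, Finset.mem_coe] at hp ⊢
      refine ⟨hp.1.2.1, ?_⟩
      have : p.2 + z = p.1 := by have := hp.2; linarith
      rw [this]; exact hp.1.1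
    · intro p hp q hq h
      have h' : p.2 = q.2 := h
      simp only [Finset.coe_filter, Set.mem_setOf_eq] at hp hq
      have h1 : p.1 = p.2 + z := by have := hp.2; linarith
      have h2 : q.1 = q.2 + z := by have := hq.2; linarith
      exact Prod.ext (by rw [h1, h2, h']) h'
  have hzne : z ≠ 0 := by rw [hT, mem_filter] at hzT; exact hzT.2
  have key : (#D.offDiag : ℝ) ≤ (K : ℝ) * (#(D.filter (fun x => x + z ∈ D)) : ℝ) := by
    have h1 : (#D.offDiag : ℝ) ≤ (#T : ℝ) * (#(D.filter (fun x => x + z ∈ D)) : ℝ) := by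
      rw [div_le_iff₀ hTpos] at hz
      calc (#D.offDiag : ℝ) ≤ (#(D.offDiag.filter (fun p => p.1 - p.2 = z)) : ℝ) * #T := hz
        _ ≤ (#(D.filter (fun x => x + z ∈ D)) : ℝ) * #T := by
            apply mul_le_mul_of_nonneg_right _ (le_of_lt hTpos)
            exact_mod_cast hfib
        _ = _ := mul_comm _ _
    refine le_trans h1 (mul_le_mul_of_nonneg_right ?_ (Nat.cast_nonneg _))
    exact_mod_cast hTK
  rcases lt_trichotomy z 0 with hneg | h0 | hpos
  · refine ⟨-z, by linarith, ?_⟩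
    rwa [shift_card_eq D z] at key
  · exact absurd h0 hzne
  · exact ⟨z, hpos, key⟩

lemma cube_lemma (M : ℕ) : ∀ (K : ℕ) (D : Finset ℝ), 1 ≤ K → #(D - D) ≤ K →
    ((8 * K : ℝ)) ^ (2 ^ M) ≤ (#D : ℝ) ^ (2 ^ M) * (4 * K) →
    ∃ (a : ℝ) (d : Fin M → ℝ), (∀ i, 0 < d i) ∧
      ∀ ε : Fin M → Bool, (a + ∑ i, if ε i then d i else 0) ∈ D := by
  induction M with
  | zero =>
    intro K D hK _ hky
    simp only [pow_zero, pow_one] at hky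
    have hKpos : (0:ℝ) < 4 * K := by positivity
    have hD2 : (2:ℝ) ≤ (#D : ℝ) := by
      by_contra h
      push_neg at h
      have h1 : (#D : ℝ) * (4 * K) < 2 * (4 * K) := by
        apply mul_lt_mul_of_pos_right h hKpos
      have h2 : 2 * (4 * (K:ℝ)) ≤ 8 * K := by ring_nf; exact le_refl _
      linarith
    have hne : D.Nonempty := by
      rw [← Finset.card_pos]
      exact_mod_cast lt_of_lt_of_le (by norm_num : (0:ℝ) < 2) hD2
    obtain ⟨a, ha⟩ := hne
    exact ⟨a, Fin.elim0, fun i => i.elim0, fun ε => by simpa using ha⟩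
  | succ M ih =>
    intro K D hK hDK hky
    have hKpos : (0:ℝ) < (K:ℝ) := by exact_mod_cast hK
    have hKR : (1:ℝ) ≤ (K:ℝ) := by exact_mod_cast hK
    set E := 2 ^ M with hE
    have hEpos : 1 ≤ E := Nat.one_le_two_pow
    have h2E : 2 ^ (M + 1) = E * 2 := by rw [hE, pow_succ]
    -- |D| ≥ 2
    have hD2 : 2 ≤ #D := by
      by_contra h
      push_neg at h
      have hd1 : (#D : ℝ) ≤ 1 := by exact_mod_cast Nat.lt_succ_iff.1 h
      have hdn : (0:ℝ) ≤ (#D : ℝ) := Nat.cast_nonneg _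
      have h1 : (#D : ℝ) ^ (2 ^ (M+1)) ≤ 1 := pow_le_one₀ hdn hd1
      have h2 : ((8:ℝ) * K) ^ (2 ^ (M+1)) ≤ 4 * K := by
        calc ((8:ℝ) * K) ^ (2 ^ (M+1)) ≤ (#D : ℝ) ^ (2 ^ (M+1)) * (4 * K) := hky
          _ ≤ 1 * (4 * K) := by
              apply mul_le_mul_of_nonneg_right h1 (by positivity)
          _ = 4 * K := one_mul _
      have h3 : ((8:ℝ) * K) ^ 1 ≤ ((8:ℝ) * K) ^ (2 ^ (M+1)) := by
        apply pow_le_pow_right₀ (by linarith) Nat.one_le_two_pow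
      simp only [pow_one] at h3
      linarith
    obtain ⟨t, ht, hpop⟩ := popular_pos_diff D K hDK hD2
    set D' := D.filter (fun x => x + t ∈ D) with hD'
    have hsub : D' ⊆ D := Finset.filter_subset _ _
    have hD'K : #(D' - D') ≤ K :=
      le_trans (Finset.card_le_card (Finset.sub_subset_sub hsub hsub)) hDK
    -- numeric: (8K)^E ≤ (#D')^E * 4K
    have hn : (2:ℝ) ≤ (#D : ℝ) := by exact_mod_cast hD2
    have hnn : (0:ℝ) ≤ (#D : ℝ) := by linarith
    have hoffR : ((#D : ℝ) * #D - #D) ≤ (K:ℝ) * #D' := by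
      have : (#D.offDiag : ℝ) = (#D : ℝ) * #D - #D := by
        rw [Finset.offDiag_card]
        have : #D ≤ #D * #D := Nat.le_mul_of_pos_left _ (by omega)
        push_cast [Nat.cast_sub this]
        ring_nf
      rw [← this]; exact hpop
    have hsq : (#D : ℝ) * #D ≤ 2 * K * #D' := by
      nlinarith [hoffR]
    have hD'nn : (0:ℝ) ≤ (#D' : ℝ) := Nat.cast_nonneg _
    have key : ((8:ℝ) * K) ^ E ≤ (#D' : ℝ) ^ E * (4 * K) := by
      have h2Kpos : (0:ℝ) < (2 * K) ^ E := by positivity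
      rw [← mul_le_mul_iff_of_pos_right h2Kpos]
      have e1 : ((#D:ℝ) * #D) ^ E ≤ (2 * K * #D') ^ E :=
        pow_le_pow_left₀ (by positivity) hsq E
      calc ((8:ℝ) * K) ^ E * (2 * K) ^ E = (16 * (K * K)) ^ E := by
            rw [← mul_pow]; ring_nf
        _ ≤ (64 * (K * K)) ^ E := by
            apply pow_le_pow_left₀ (by positivity)
            nlinarith
        _ = ((8:ℝ) * K) ^ (2 ^ (M+1)) := by
            rw [show ((64:ℝ) * (K*K)) = (8*K)^2 by ring, ← pow_mul, mul_comm 2 E, ← h2E]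
        _ ≤ (#D : ℝ) ^ (2 ^ (M+1)) * (4 * K) := hky
        _ = ((#D:ℝ) * #D) ^ E * (4 * K) := by
            rw [h2E, pow_mul]; ring_nf
        _ ≤ (2 * K * #D') ^ E * (4 * K) := by
            apply mul_le_mul_of_nonneg_right e1 (by positivity)
        _ = (#D' : ℝ) ^ E * (4 * K) * (2 * K) ^ E := by
            rw [mul_pow]; ring
    obtain ⟨a, d, hdpos, hcube⟩ := ih K D' hK hD'K key
    refine ⟨a, Fin.cons t d, ?_, ?_⟩
    · intro i
      refine Fin.cases ?_ ?_ i
      · simpa using ht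
      · intro j; simpa using hdpos j
    · intro ε
      have hsum : ∑ i, (if ε i then Fin.cons t d i else 0) =
          (if ε 0 then t else 0) + ∑ i : Fin M, (if ε i.succ then d i else 0) := by
        rw [Fin.sum_univ_succ]
        simp
      rw [hsum]
      have hc := hcube (fun i => ε i.succ)
      rw [hD', Finset.mem_filter] at hc
      by_cases h0 : ε 0
      · simp only [h0, if_true]
        have := hc.2
        convert this using 1
        ring
      · have h1 : (if ε 0 = true then t else 0) = 0 := by simp [h0]
        rw [h1, zero_add]
        exact hc.1

lemma subspace_sum {m N : ℕ} (hm : 0 < m) (l : Subspace (Fin m) (Bool × Bool) (Fin N))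
    (d : Fin N → ℝ) (proj : Bool × Bool → Bool) (x : Fin m → Bool × Bool) :
    ∑ i, (if proj (l x i) then d i else 0) =
      (∑ i ∈ univ.filter (fun i => (l.idxFun i).isLeft),
        if proj ((l.idxFun i).elim id (fun _ => (false, false))) then d i else 0)
      + ∑ k, (if proj (x k) then
          ∑ i ∈ univ.filter (fun i => l.idxFun i = Sum.inr k), d i else 0) := by
  classical
  rw [← Finset.sum_filter_add_sum_filter_not univ (fun i => (l.idxFun i).isLeft)]
  congr 1
  · apply Finset.sum_congr rfl
    intro i hi
    rw [Finset.mem_filter] at hi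
    obtain ⟨a, ha⟩ := Sum.isLeft_iff.mp hi.2
    rw [Subspace.apply_inl ha, ha]
    simp
    exact if_congr Iff.rfl rfl rfl
  · -- sum over "right" coordinates, fiberwise over Fin m
    have k0 : Fin m := ⟨0, hm⟩
    set s := univ.filter (fun i : Fin N => ¬ (l.idxFun i).isLeft) with hs
    set g : Fin N → Fin m := fun i => (l.idxFun i).elim (fun _ => k0) id with hg
    have hmaps : ∀ i ∈ s, g i ∈ (univ : Finset (Fin m)) := fun i _ => mem_univ _
    rw [← Finset.sum_fiberwise_of_maps_to hmaps (fun i => if proj (l x i) then d i else 0)]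
    apply Finset.sum_congr rfl
    intro k _
    have hset : s.filter (fun i => g i = k) = univ.filter (fun i => l.idxFun i = Sum.inr k) := by
      ext i
      simp only [hs, hg, Finset.mem_filter, Finset.mem_univ, true_and]
      constructor
      · rintro ⟨h1, h2⟩
        obtain ⟨e, he⟩ := Sum.not_isLeft.mp h1 |> Sum.isRight_iff.mp
        rw [he] at h2 ⊢
        simpa using h2
      · intro h
        rw [h]
        exact ⟨by simp, by simp⟩
    rw [hset]
    have hval : ∀ i ∈ univ.filter (fun i => l.idxFun i = Sum.inr k),
        (if proj (l x i) then d i else 0) = (if proj (x k) then d i else 0) := by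
      intro i hi
      rw [Finset.mem_filter] at hi
      rw [Subspace.apply_inr hi.2]
    rw [Finset.sum_congr rfl hval]
    by_cases h : proj (x k)
    · simp [h]
    · simp [h]

/-- For every `r` and `m` there are `δ = δ(r, m) > 0` and `n₀ = n₀(r, m)` such
that: if `A, B` are sets of reals with `|A| = |B| = n ≥ n₀` and
`|A + B| ≤ n ^ (1 + δ)`, then for any `r`-coloring of `A × B` there are reals
`a, b` and nonzero reals `a₁, …, a_m` with the Hilbert cube
`H_m(a; a₁, …, a_m) ⊆ A`, the Hilbert cube `H_m(b; a₁, …, a_m) ⊆ B`, and all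
points of their Cartesian product of the same color. -/
theorem monochromatic_hilbert_cubes_of_small_sumset :
    ∀ r m : ℕ, 0 < r → 0 < m → ∃ δ : ℝ, 0 < δ ∧ ∃ n₀ : ℕ,
      ∀ (n : ℕ) (A B : Finset ℝ), A.card = n → B.card = n → n₀ ≤ n →
        ((A + B).card : ℝ) ≤ (n : ℝ) ^ ((1 : ℝ) + δ) →
        ∀ χ : ℝ × ℝ → Fin r,
          ∃ (a b : ℝ) (a' : Fin m → ℝ), (∀ i, a' i ≠ 0) ∧
            (∀ ε : Fin m → Bool, a + ∑ i, (if ε i then a' i else 0) ∈ A) ∧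
            (∀ ε : Fin m → Bool, b + ∑ i, (if ε i then a' i else 0) ∈ B) ∧
            (∀ ε ε' : Fin m → Bool,
              χ (a + ∑ i, (if ε i then a' i else 0),
                 b + ∑ i, (if ε' i then a' i else 0)) = χ (a, b)) := by
  intro r m hr hm
  classical
  obtain ⟨N, hN⟩ := Combinatorics.Subspace.exists_mono_in_high_dimension_fin
    (Bool × Bool) (Fin r) (Fin m)
  set E := 2 ^ N with hE
  have hE1 : 1 ≤ E := Nat.one_le_two_pow
  have hEr : (1:ℝ) ≤ (E:ℝ) := by exact_mod_cast hE1
  have hEr0 : (0:ℝ) < (E:ℝ) := by linarith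
  refine ⟨1 / (6 * (E:ℝ)), by positivity, 64 ^ E, ?_⟩
  intro n A B hA hB hn hsum χ
  set δ : ℝ := 1 / (6 * (E:ℝ)) with hδ
  have hδpos : 0 < δ := by positivity
  set ν : ℝ := (n : ℝ) with hν'
  have hν : ((64:ℝ)) ^ E ≤ ν := by
    rw [hν']
    exact_mod_cast hn
  have h64E : (64:ℝ) ≤ (64:ℝ) ^ E := le_self_pow₀ (by norm_num) (by omega)
  have hν2 : (2:ℝ) ≤ ν := by linarith
  have hν0 : (0:ℝ) < ν := by linarith
  have hν1 : (1:ℝ) < ν := by linarith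
  have hnpos : 0 < n := by
    have : (0:ℝ) < (n:ℝ) := hν0
    exact_mod_cast this
  have hAne : A.Nonempty := Finset.card_pos.1 (by rw [hA]; exact hnpos)
  have hBne : B.Nonempty := Finset.card_pos.1 (by rw [hB]; exact hnpos)
  have hABne : (A + B).Nonempty := hAne.add hBne
  set S : ℝ := (#(A + B) : ℝ) with hS'
  have hSpos : (0:ℝ) < S := by
    rw [hS']
    exact_mod_cast Finset.card_pos.2 hABne
  -- pigeonhole: popular sum s
  have hmaps : ∀ p ∈ A ×ˢ B, p.1 + p.2 ∈ A + B := by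
    intro p hp
    rw [Finset.mem_product] at hp
    exact Finset.add_mem_add hp.1 hp.2
  have hcount : #(A ×ˢ B) = ∑ z ∈ A + B, #((A ×ˢ B).filter (fun p => p.1 + p.2 = z)) :=
    Finset.card_eq_sum_card_fiberwise hmaps
  have hfib : ∀ z ∈ A + B, #((A ×ˢ B).filter (fun p => p.1 + p.2 = z)) ≤
      #(A.filter (fun x => z - x ∈ B)) := by
    intro z _
    apply Finset.card_le_card_of_injOn (fun p => p.1)
    · intro p hp
      simp only [Finset.mem_filter, Finset.mem_product, Finset.mem_coe] at hp ⊢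
      refine ⟨hp.1.1, ?_⟩
      have : z - p.1 = p.2 := by have := hp.2; linarith
      rw [this]; exact hp.1.2
    · intro p hp q hq h
      have h' : p.1 = q.1 := h
      simp only [Finset.coe_filter, Set.mem_setOf_eq] at hp hq
      have h2 : p.2 = q.2 := by
        have e1 := hp.2; have e2 := hq.2
        rw [h'] at e1; linarith
      exact Prod.ext h' h2
  have hpig : ∑ _z ∈ A + B, (ν * ν) / S ≤
      ∑ z ∈ A + B, (#(A.filter (fun x => z - x ∈ B)) : ℝ) := by
    rw [Finset.sum_const, nsmul_eq_mul, ← hS', mul_div_cancel₀ _ (ne_of_gt hSpos)]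
    have h1 : ν * ν = (#(A ×ˢ B) : ℝ) := by
      rw [Finset.card_product, hA, hB, hν']; push_cast; ring
    rw [h1, hcount]
    push_cast
    apply Finset.sum_le_sum
    intro z hz
    exact_mod_cast hfib z hz
  obtain ⟨s, hsmem, hsD⟩ := Finset.exists_le_of_sum_le hABne hpig
  set D := A.filter (fun x => s - x ∈ B) with hD
  have hDA : D ⊆ A := Finset.filter_subset _ _
  have hDB : ∀ x ∈ D, s - x ∈ B := by
    intro x hx
    rw [hD, Finset.mem_filter] at hx
    exact hx.2
  -- Ruzsa
  set K := #(A - A) with hK'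
  have hK1 : 1 ≤ K := by
    rw [hK']
    exact Finset.card_pos.2 (hAne.sub hAne)
  have hK0 : (0:ℝ) ≤ (K:ℝ) := Nat.cast_nonneg _
  have hKR : (1:ℝ) ≤ (K:ℝ) := by exact_mod_cast hK1
  have hruzsa : (K:ℝ) * ν ≤ S * S := by
    have h := Finset.ruzsa_triangle_inequality_sub_add_add A B A
    have h2 : #(A - A) * #B ≤ #(A + B) * #(A + B) := h
    rw [hB] at h2
    rw [hK', hS', hν']
    exact_mod_cast h2
  have hDsubK : #(D - D) ≤ K := by
    rw [hK']
    exact Finset.card_le_card (Finset.sub_subset_sub hDA hDA)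
  -- numeric bounds
  have hSν : S ≤ ν ^ ((1:ℝ) + δ) := hsum
  have hrpow_nonneg : ∀ q : ℝ, (0:ℝ) ≤ ν ^ q := fun q => Real.rpow_nonneg (le_of_lt hν0) q
  have hK2 : (K:ℝ) ≤ ν ^ ((1:ℝ) + 2*δ) := by
    have h1 : (K:ℝ) * ν ≤ ν ^ ((1:ℝ)+δ) * ν ^ ((1:ℝ)+δ) :=
      le_trans hruzsa (mul_le_mul hSν hSν (le_of_lt hSpos) (hrpow_nonneg _))
    have h2 : ν ^ ((1:ℝ)+δ) * ν ^ ((1:ℝ)+δ) = ν ^ ((1:ℝ)+2*δ) * ν := by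
      rw [← Real.rpow_add hν0]
      nth_rewrite 3 [← Real.rpow_one ν]
      rw [← Real.rpow_add hν0]
      ring_nf
    rw [h2] at h1
    exact le_of_mul_le_mul_right h1 hν0
  have hDlow : ν ^ ((1:ℝ) - δ) ≤ (#D : ℝ) := by
    have h1 : ν ^ ((1:ℝ)-δ) * S ≤ ν * ν := by
      calc ν ^ ((1:ℝ)-δ) * S ≤ ν ^ ((1:ℝ)-δ) * ν ^ ((1:ℝ)+δ) :=
            mul_le_mul_of_nonneg_left hSν (hrpow_nonneg _)
        _ = ν * ν := by
            rw [← Real.rpow_add hν0]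
            have he : (1:ℝ) - δ + (1 + δ) = 2 := by ring
            rw [he, show (2:ℝ) = ((2:ℕ):ℝ) by norm_num, Real.rpow_natCast]
            ring
    have h2 : ν * ν ≤ (#D : ℝ) * S := by
      rw [div_le_iff₀ hSpos] at hsD
      rw [hD]; exact hsD
    have := le_trans h1 h2
    exact le_of_mul_le_mul_right this hSpos
  have hcastE : ((E - 1 : ℕ):ℝ) = (E:ℝ) - 1 := by
    rw [Nat.cast_sub hE1]; norm_num
  have h8 : (8:ℝ) ^ E ≤ ν ^ ((1:ℝ)/2) := by
    have key : ((8:ℝ) ^ E) = ((64:ℝ)^E) ^ ((1:ℝ)/2) := by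
      rw [show (64:ℝ) = 8^(2:ℕ) by norm_num, ← pow_mul]
      rw [← Real.rpow_natCast (8:ℝ) (2*E), ← Real.rpow_natCast (8:ℝ) E,
        ← Real.rpow_mul (by norm_num : (0:ℝ) ≤ 8)]
      congr 1
      push_cast; ring
    rw [key]
    exact Real.rpow_le_rpow (by positivity) hν (by norm_num)
  have hKE : (K:ℝ) ^ (E - 1) ≤ ν ^ (((1:ℝ) + 2*δ) * ((E:ℝ) - 1)) := by
    calc (K:ℝ)^(E-1) ≤ (ν ^ ((1:ℝ)+2*δ))^(E-1) := pow_le_pow_left₀ hK0 hK2 _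
      _ = ν ^ (((1:ℝ)+2*δ) * ((E:ℝ)-1)) := by
          rw [← Real.rpow_natCast (ν ^ ((1:ℝ)+2*δ)) (E-1), hcastE,
            ← Real.rpow_mul (le_of_lt hν0)]
  have hDE : ν ^ (((1:ℝ) - δ) * (E:ℝ)) ≤ (#D:ℝ)^E := by
    calc ν ^ (((1:ℝ)-δ)*(E:ℝ)) = (ν ^ ((1:ℝ)-δ))^E := by
          rw [Real.rpow_mul (le_of_lt hν0), Real.rpow_natCast]
      _ ≤ (#D:ℝ)^E := pow_le_pow_left₀ (hrpow_nonneg _) hDlow E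
  have hδE : δ * (E:ℝ) = 1/6 := by
    rw [hδ]; field_simp
  have hexp : (1:ℝ)/2 + ((1:ℝ)+2*δ)*((E:ℝ)-1) ≤ ((1:ℝ)-δ)*(E:ℝ) := by
    nlinarith [hδpos, hδE]
  have hmain : (8:ℝ)^E * (K:ℝ)^(E-1) ≤ (#D:ℝ)^E := by
    calc (8:ℝ)^E * (K:ℝ)^(E-1) ≤ ν ^ ((1:ℝ)/2) * ν ^ (((1:ℝ)+2*δ)*((E:ℝ)-1)) :=
          mul_le_mul h8 hKE (by positivity) (hrpow_nonneg _)
      _ = ν ^ ((1:ℝ)/2 + ((1:ℝ)+2*δ)*((E:ℝ)-1)) := (Real.rpow_add hν0 _ _).symm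
      _ ≤ ν ^ (((1:ℝ)-δ)*(E:ℝ)) := Real.rpow_le_rpow_of_exponent_le (le_of_lt hν1) hexp
      _ ≤ (#D:ℝ)^E := hDE
  have hkey : ((8 * K : ℝ)) ^ E ≤ (#D:ℝ)^E * (4*K) := by
    have hKe : (K:ℝ)^E = (K:ℝ)^(E-1) * K := by
      conv_lhs => rw [← Nat.sub_add_cancel hE1]
      rw [pow_succ]
    rw [mul_pow, hKe, ← mul_assoc]
    calc (8:ℝ)^E * (K:ℝ)^(E-1) * K ≤ (#D:ℝ)^E * K :=
          mul_le_mul_of_nonneg_right hmain hK0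
      _ ≤ (#D:ℝ)^E * (4*K) := by
          apply mul_le_mul_of_nonneg_left (by linarith) (by positivity)
  obtain ⟨a₀, d, hdpos, hcube⟩ := cube_lemma N K D hK1 hDsubK hkey
  -- Hales-Jewett coloring
  set C : (Fin N → Bool × Bool) → Fin r := fun p =>
    χ (a₀ + ∑ i, (if (p i).1 then d i else 0),
       s - (a₀ + ∑ i, (if (p i).2 then d i else 0))) with hC
  obtain ⟨l, c, hc⟩ := hN C
  set a' : Fin m → ℝ := fun k =>
    ∑ i ∈ univ.filter (fun i => l.idxFun i = Sum.inr k), d i with ha'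
  have ha'pos : ∀ k, 0 < a' k := by
    intro k
    apply Finset.sum_pos (fun i _ => hdpos i)
    obtain ⟨i, hi⟩ := l.proper k
    exact ⟨i, by simp [hi]⟩
  set A0 : ℝ := a₀ + ∑ i ∈ univ.filter (fun i : Fin N => (l.idxFun i).isLeft),
    (if ((l.idxFun i).elim id (fun _ => ((false:Bool), (false:Bool)))).1 then d i else 0) with hA0
  set B0 : ℝ := a₀ + ∑ i ∈ univ.filter (fun i : Fin N => (l.idxFun i).isLeft),
    (if ((l.idxFun i).elim id (fun _ => ((false:Bool), (false:Bool)))).2 then d i else 0) with hB0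
  have hu1 : ∀ x : Fin m → Bool × Bool,
      a₀ + ∑ i, (if (l x i).1 then d i else 0) = A0 + ∑ k, (if (x k).1 then a' k else 0) := by
    intro x
    rw [hA0, subspace_sum hm l d Prod.fst x, ha']
    ring
  have hu2 : ∀ x : Fin m → Bool × Bool,
      a₀ + ∑ i, (if (l x i).2 then d i else 0) = B0 + ∑ k, (if (x k).2 then a' k else 0) := by
    intro x
    rw [hB0, subspace_sum hm l d Prod.snd x, ha']
    ring
  have hmemD : ∀ x : Fin m → Bool × Bool, ∀ pr : Bool × Bool → Bool,
      (a₀ + ∑ i, (if pr (l x i) then d i else 0)) ∈ D :=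
    fun x pr => hcube (fun i => pr (l x i))
  refine ⟨A0, s - B0 - ∑ k, a' k, a', fun k => ne_of_gt (ha'pos k), ?_, ?_, ?_⟩
  · -- cube in A
    intro ε
    have h := hmemD (fun k => (ε k, false)) Prod.fst
    rw [hu1 (fun k => (ε k, false))] at h
    simp only at h
    exact hDA h
  · -- cube in B
    intro ε
    have h := hmemD (fun k => ((false:Bool), !(ε k))) Prod.snd
    rw [hu2 (fun k => ((false:Bool), !(ε k)))] at h
    simp only at h
    have hB' := hDB _ h
    have hsplit : ∑ k, (if ε k then a' k else 0) + ∑ k, (if !(ε k) then a' k else 0)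
        = ∑ k, a' k := by
      rw [← Finset.sum_add_distrib]
      apply Finset.sum_congr rfl
      intro k _
      cases hek : ε k <;> simp
    have : s - B0 - ∑ k, a' k + ∑ k, (if ε k then a' k else 0)
        = s - (B0 + ∑ k, (if !(ε k) then a' k else 0)) := by
      linear_combination hsplit
    rw [this]
    exact hB'
  · -- colors
    have hcol : ∀ ε ε' : Fin m → Bool,
        χ (A0 + ∑ k, (if ε k then a' k else 0),
           s - B0 - ∑ k, a' k + ∑ k, (if ε' k then a' k else 0)) = c := by
      intro ε ε'
      have h := hc (fun k => (ε k, !(ε' k)))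
      rw [hC] at h
      simp only at h
      rw [hu1 (fun k => (ε k, !(ε' k))), hu2 (fun k => (ε k, !(ε' k)))] at h
      simp only at h
      have hsplit : ∑ k, (if ε' k then a' k else 0) + ∑ k, (if !(ε' k) then a' k else 0)
          = ∑ k, a' k := by
        rw [← Finset.sum_add_distrib]
        apply Finset.sum_congr rfl
        intro k _
        cases hek : ε' k <;> simp
      have heq : s - B0 - ∑ k, a' k + ∑ k, (if ε' k then a' k else 0)
          = s - (B0 + ∑ k, (if !(ε' k) then a' k else 0)) := by
        linear_combination hsplit
      rw [heq]
      exact h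
    intro ε ε'
    rw [hcol ε ε']
    have h0 := hcol (fun _ => false) (fun _ => false)
    simp only [Bool.false_eq_true, if_false, Finset.sum_const_zero, add_zero] at h0
    exact h0.symm


end MonochromaticHilbertCubes
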